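/- Let (Ω, ℱ, P) be a probability space with Ω a standard Borel space, 𝒳 a standard Borel space, X : Ω → 𝒳 measurable, A : Ω → {−1, 1} a random variable, and T, C : Ω → ℝ random variables with 0 ≤ T ≤ h almost surely for some h > 0, such that T and C are conditionally independent given σ(X, A). Set Y = min(T, C) and Δ = 1{T ≤ C}. Let κ be a regular conditional distribution of C given (X, A), set S_C(t, x, a) = κ(x, a)([t, ∞)), and assume S_C(h, X, A) ≥ η_C almost surely for some η_C > 0. Let π : {−1,1} × 𝒳 → ℝ be measurable with η ≤ π ≤ 1 for some η > 0, let d : 𝒳 → {−1, 1} be measurable, and let γ ∈ (0,1). Then for every α ∈ ℝ, E[(α − T)·1{T ≤ α} · 1{A = d(X)} / π(A, X)] = E[Δ·(α − Y)·1{Y ≤ α} · 1{A = d(X)} / (S_C(Y, X, A)·π(A, X))], and consequently sup_{α∈ℝ} {αγ − E[(α − T)·1{T ≤ α}·1{A = d(X)}/π(A, X)]} = sup_{α∈ℝ} {αγ − E[Δ·(α − Y)·1{Y ≤ α}·1{A = d(X)}/(S_C(Y, X, A)·π(A, X))]}. -/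

import Mathlib

open MeasureTheory ProbabilityTheory

/-- IPCW key lemma: for bounded measurable `g`,
`E[g(T,X,A)·1{T≤C}] = E[g(T,X,A)·S_C(T,X,A)]`. -/
lemma ipcw_key {Ω 𝒳 : Type*} [mΩ : MeasurableSpace Ω] [StandardBorelSpace Ω]
    [MeasurableSpace 𝒳]
    (P : Measure Ω) [IsProbabilityMeasure P]
    (X : Ω → 𝒳) (hX : Measurable X)
    (A : Ω → ℝ) (hA : Measurable A)
    (T C : Ω → ℝ) (hT : Measurable T) (hC : Measurable C)
    (hindep : CondIndepFun (MeasurableSpace.comap (fun ω => (X ω, A ω)) inferInstance)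
      ((hX.prodMk hA).comap_le) T C P)
    (κ : 𝒳 → ℝ → Measure ℝ) (hκprob : ∀ x a, IsProbabilityMeasure (κ x a))
    (hκmeas : ∀ B : Set ℝ, MeasurableSet B →
      Measurable fun p : 𝒳 × ℝ => (κ p.1 p.2 B).toReal)
    (hκver : ∀ B : Set ℝ, MeasurableSet B →
      (fun ω => (κ (X ω) (A ω) B).toReal) =ᵐ[P]
        P[fun ω => B.indicator (fun _ => (1 : ℝ)) (C ω) |
          MeasurableSpace.comap (fun ω => (X ω, A ω)) inferInstance])
    (g : ℝ × 𝒳 × ℝ → ℝ) (hg : Measurable g) (M : ℝ) (hgb : ∀ w, |g w| ≤ M) :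
    ∫ ω, g (T ω, X ω, A ω) * (if T ω ≤ C ω then (1:ℝ) else 0) ∂P
      = ∫ ω, g (T ω, X ω, A ω) * (κ (X ω) (A ω) (Set.Ici (T ω))).toReal ∂P := by
  classical
  set Z : Ω → 𝒳 × ℝ := fun ω => (X ω, A ω) with hZ_def
  have hm : MeasurableSpace.comap Z inferInstance ≤ mΩ := (hX.prodMk hA).comap_le
  have hZ : Measurable Z := hX.prodMk hA
  set W : Ω → ℝ × 𝒳 × ℝ := fun ω => (T ω, Z ω) with hW_def
  have hW : Measurable W := hT.prodMk hZ
  -- the censoring kernel, as a function of (t, x, a)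
  have hKEmeas : ∀ B : Set ℝ, MeasurableSet B →
      Measurable fun p : 𝒳 × ℝ => κ p.1 p.2 B := by
    intro B hB
    have h2 : Measurable fun p : 𝒳 × ℝ => ENNReal.ofReal ((κ p.1 p.2 B).toReal) :=
      ENNReal.measurable_ofReal.comp (hκmeas B hB)
    have : (fun p : 𝒳 × ℝ => κ p.1 p.2 B)
        = fun p : 𝒳 × ℝ => ENNReal.ofReal ((κ p.1 p.2 B).toReal) := by
      funext p
      haveI := hκprob p.1 p.2
      exact (ENNReal.ofReal_toReal (measure_ne_top _ _)).symm
    rw [this]; exact h2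
  have hKmeas : Measurable fun w : ℝ × 𝒳 × ℝ => κ w.2.1 w.2.2 :=
    Measure.measurable_of_measurable_coe _ fun B hB => (hKEmeas B hB).comp measurable_snd
  set K : Kernel (ℝ × 𝒳 × ℝ) ℝ := ⟨fun w => κ w.2.1 w.2.2, hKmeas⟩ with hK_def
  haveI : IsMarkovKernel K := ⟨fun w => hκprob _ _⟩
  have hKapp : ∀ w, K w = κ w.2.1 w.2.2 := fun w => rfl
  haveI : SigmaFinite (P.trim hm) := inferInstance
  -- Step A: rectangle identity from conditional independence
  have stepA : ∀ (B1 : Set ℝ) (B2 : Set (𝒳 × ℝ)) (B : Set ℝ), MeasurableSet B1 →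
      MeasurableSet B2 → MeasurableSet B →
      P (T ⁻¹' B1 ∩ Z ⁻¹' B2 ∩ C ⁻¹' B)
        = ∫⁻ ω in T ⁻¹' B1 ∩ Z ⁻¹' B2, κ (X ω) (A ω) B ∂P := by
    intro B1 B2 B hB1 hB2 hB
    set q : Ω → ℝ := fun ω => (κ (X ω) (A ω) B).toReal with hq_def
    have hqm : Measurable[MeasurableSpace.comap Z inferInstance] q := by
      have hZm : Measurable[MeasurableSpace.comap Z inferInstance] Z := measurable_iff_comap_le.mpr le_rfl
      exact (hκmeas B hB).comp hZm
    have hq_bound : ∀ ω, ‖q ω‖ ≤ 1 := by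
      intro ω
      haveI := hκprob (X ω) (A ω)
      rw [Real.norm_eq_abs, abs_of_nonneg ENNReal.toReal_nonneg]
      exact ENNReal.toReal_le_of_le_ofReal zero_le_one (by simpa using prob_le_one)
    set ξ : Ω → ℝ := (T ⁻¹' B1).indicator (fun _ => (1:ℝ)) with hξ_def
    have hξ_int : Integrable ξ P := (integrable_const (1:ℝ)).indicator (hT hB1)
    have hcond := (condIndepFun_iff_condExp_inter_preimage_eq_mul hT hC).mp hindep B1 B hB1 hB
    have hker : (fun ω => (κ (X ω) (A ω) B).toReal) =ᵐ[P] P⟦C ⁻¹' B | MeasurableSpace.comap Z inferInstance⟧ := by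
      have heq : (fun ω => B.indicator (fun _ => (1:ℝ)) (C ω))
          = (C ⁻¹' B).indicator (fun _ => (1:ℝ)) := by
        funext ω; simp [Set.indicator_apply, Set.mem_preimage]
      have := hκver B hB
      rw [heq] at this
      exact this
    have hpull : P[fun ω => q ω * ξ ω | MeasurableSpace.comap Z inferInstance] =ᵐ[P] fun ω => q ω * (P[ξ|MeasurableSpace.comap Z inferInstance]) ω :=
      condExp_stronglyMeasurable_mul_of_bound hm hqm.stronglyMeasurable hξ_int 1
        (Filter.Eventually.of_forall hq_bound)
    have hSm : MeasurableSet[MeasurableSpace.comap Z inferInstance] (Z ⁻¹' B2) := ⟨B2, hB2, rfl⟩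
    have hSmΩ : MeasurableSet (Z ⁻¹' B2) := hZ hB2
    have hind_int : Integrable ((T ⁻¹' B1 ∩ C ⁻¹' B).indicator (fun _ => (1:ℝ))) P :=
      (integrable_const (1:ℝ)).indicator ((hT hB1).inter (hC hB))
    have hqξ_int : Integrable (fun ω => q ω * ξ ω) P :=
      hξ_int.bdd_mul (hqm.mono hm le_rfl).aestronglyMeasurable
        (Filter.Eventually.of_forall hq_bound)
    have r1 : ∫ ω in Z ⁻¹' B2, ((T ⁻¹' B1 ∩ C ⁻¹' B).indicator (fun _ => (1:ℝ))) ω ∂P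
        = ∫ ω in Z ⁻¹' B2, q ω * ξ ω ∂P := by
      calc ∫ ω in Z ⁻¹' B2, ((T ⁻¹' B1 ∩ C ⁻¹' B).indicator (fun _ => (1:ℝ))) ω ∂P
          = ∫ ω in Z ⁻¹' B2, (P⟦T ⁻¹' B1 ∩ C ⁻¹' B | MeasurableSpace.comap Z inferInstance⟧) ω ∂P :=
            (setIntegral_condExp hm hind_int hSm).symm
        _ = ∫ ω in Z ⁻¹' B2, (fun ω => q ω * ξ ω) ω ∂P := by
            rw [← setIntegral_condExp hm hqξ_int hSm]
            refine setIntegral_congr_ae hSmΩ ?_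
            filter_upwards [hcond, hker, hpull] with ω h1 h2 h3 _
            rw [h1, h3, ← h2, mul_comm]
        _ = ∫ ω in Z ⁻¹' B2, q ω * ξ ω ∂P := rfl
    -- convert both sides
    have hU : MeasurableSet (T ⁻¹' B1 ∩ Z ⁻¹' B2) := (hT hB1).inter hSmΩ
    have hlhs : ∫ ω in Z ⁻¹' B2, ((T ⁻¹' B1 ∩ C ⁻¹' B).indicator (fun _ => (1:ℝ))) ω ∂P
        = (P (T ⁻¹' B1 ∩ Z ⁻¹' B2 ∩ C ⁻¹' B)).toReal := by
      rw [integral_indicator_const (1:ℝ) ((hT hB1).inter (hC hB)), Measure.real_def, Measure.restrict_apply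
        ((hT hB1).inter (hC hB)), smul_eq_mul, mul_one]
      congr 2
      ext ω
      simp only [Set.mem_inter_iff, Set.mem_preimage]
      tauto
    have hrhs : ∫ ω in Z ⁻¹' B2, q ω * ξ ω ∂P
        = (∫⁻ ω in T ⁻¹' B1 ∩ Z ⁻¹' B2, κ (X ω) (A ω) B ∂P).toReal := by
      have h1 : (fun ω => q ω * ξ ω) = (T ⁻¹' B1).indicator q := by
        funext ω
        by_cases hω : ω ∈ T ⁻¹' B1 <;>
          simp [hξ_def, Set.indicator_apply, hω]
      rw [h1, integral_indicator (hT hB1), Measure.restrict_restrict (hT hB1)]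
      have hEmeas : Measurable fun ω => κ (X ω) (A ω) B := (hKEmeas B hB).comp hZ
      have hae : ∀ᵐ ω ∂(P.restrict (T ⁻¹' B1 ∩ Z ⁻¹' B2)), κ (X ω) (A ω) B < ⊤ := by
        filter_upwards with ω
        haveI := hκprob (X ω) (A ω)
        exact measure_lt_top _ _
      rw [← integral_toReal hEmeas.aemeasurable.restrict hae]
    have hfin2 : ∫⁻ ω in T ⁻¹' B1 ∩ Z ⁻¹' B2, κ (X ω) (A ω) B ∂P ≠ ⊤ := by
      have hle : ∫⁻ ω in T ⁻¹' B1 ∩ Z ⁻¹' B2, κ (X ω) (A ω) B ∂P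
          ≤ ∫⁻ _ω in T ⁻¹' B1 ∩ Z ⁻¹' B2, 1 ∂P := by
        refine lintegral_mono fun ω => ?_
        haveI := hκprob (X ω) (A ω)
        exact prob_le_one
      refine ne_of_lt (lt_of_le_of_lt hle ?_)
      rw [lintegral_one]
      exact lt_of_le_of_lt (measure_mono (Set.subset_univ _))
        (measure_lt_top (P.restrict _) _) |>.trans_le le_rfl
    refine (ENNReal.toReal_eq_toReal_iff' (measure_ne_top _ _) hfin2).mp ?_
    rw [← hlhs, ← hrhs]
    exact r1
  -- Step C': the law of W on {C ∈ B} has density K · B w.r.t. the law of W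
  have stepC' : ∀ B : Set ℝ, MeasurableSet B →
      Measure.map W (P.restrict (C ⁻¹' B))
        = (Measure.map W P).withDensity (fun w => K w B) := by
    intro B hB
    have hKB : Measurable fun w : ℝ × 𝒳 × ℝ => K w B := K.measurable_coe hB
    haveI : IsFiniteMeasure (Measure.map W (P.restrict (C ⁻¹' B))) := by
      constructor
      rw [Measure.map_apply hW MeasurableSet.univ]
      exact measure_lt_top _ _
    haveI : IsFiniteMeasure ((Measure.map W P).withDensity (fun w => K w B)) := by
      constructor
      rw [withDensity_apply _ MeasurableSet.univ]
      calc ∫⁻ w in Set.univ, K w B ∂(Measure.map W P)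
          ≤ ∫⁻ _w in Set.univ, 1 ∂(Measure.map W P) := by
            refine lintegral_mono fun w => prob_le_one
        _ < ⊤ := by
            rw [lintegral_one]
            exact measure_lt_top _ _
    refine ext_of_generate_finite _ generateFrom_prod.symm isPiSystem_prod ?_ ?_
    · rintro s ⟨B1, hB1, B2, hB2, rfl⟩
      have hB1 : MeasurableSet B1 := hB1
      have hB2 : MeasurableSet B2 := hB2
      rw [Measure.map_apply hW ((hB1 : MeasurableSet B1).prod hB2),
        Measure.restrict_apply (hW ((hB1 : MeasurableSet B1).prod hB2)),
        withDensity_apply _ ((hB1 : MeasurableSet B1).prod hB2),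
        setLIntegral_map ((hB1 : MeasurableSet B1).prod hB2) hKB hW,
        Set.mk_preimage_prod]
      exact stepA B1 B2 B hB1 hB2 hB
    · rw [Measure.map_apply hW MeasurableSet.univ, Set.preimage_univ,
        Measure.restrict_apply_univ, withDensity_apply _ MeasurableSet.univ,
        Measure.restrict_univ, lintegral_map hKB hW]
      have := stepA Set.univ Set.univ B MeasurableSet.univ MeasurableSet.univ hB
      simp at this ⊢; exact this
  -- Step C: the joint law of (W, C) is the compProd of the law of W with K
  haveI : IsProbabilityMeasure (Measure.map W P) := Measure.isProbabilityMeasure_map hW.aemeasurable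
  have hmap : Measure.map (fun ω => (W ω, C ω)) P = (Measure.map W P) ⊗ₘ K := by
    haveI : IsProbabilityMeasure (Measure.map (fun ω => (W ω, C ω)) P) :=
      Measure.isProbabilityMeasure_map (hW.prodMk hC).aemeasurable
    refine ext_of_generate_finite _ generateFrom_prod.symm isPiSystem_prod ?_ ?_
    · rintro s ⟨S, hS, B, hB, rfl⟩
      have hS : MeasurableSet S := hS
      have hB : MeasurableSet B := hB
      rw [Measure.map_apply (hW.prodMk hC) ((hS : MeasurableSet S).prod hB),
        Set.mk_preimage_prod, Measure.compProd_apply_prod hS hB,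
        ← withDensity_apply _ (hS : MeasurableSet S), ← stepC' B hB,
        Measure.map_apply hW (hS : MeasurableSet S),
        Measure.restrict_apply (hW (hS : MeasurableSet S))]
    · simp [measure_univ]
  -- Step D/E: disintegrate
  set F : (ℝ × 𝒳 × ℝ) × ℝ → ℝ := fun p => g p.1 * (if p.1.1 ≤ p.2 then (1:ℝ) else 0)
    with hF_def
  have hFmeas : Measurable F := by
    refine (hg.comp measurable_fst).mul ?_
    exact Measurable.ite (measurableSet_le measurable_fst.fst measurable_snd)
      measurable_const measurable_const
  have hFbound : ∀ p, ‖F p‖ ≤ M := by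
    intro p
    rw [Real.norm_eq_abs, hF_def, abs_mul]
    have h1 := hgb p.1
    have h2 : |if p.1.1 ≤ p.2 then (1:ℝ) else 0| ≤ 1 := by split <;> simp
    calc |g p.1| * |if p.1.1 ≤ p.2 then (1:ℝ) else 0| ≤ M * 1 :=
          mul_le_mul h1 h2 (abs_nonneg _) (le_trans (abs_nonneg _) h1)
      _ = M := mul_one M
  have hFint : Integrable F ((Measure.map W P) ⊗ₘ K) :=
    (integrable_const M).mono' hFmeas.aestronglyMeasurable
      (Filter.Eventually.of_forall hFbound)
  have hKIci : Measurable fun w : ℝ × 𝒳 × ℝ => K w (Set.Ici w.1) := by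
    have hs : MeasurableSet {p : (ℝ × 𝒳 × ℝ) × ℝ | p.1.1 ≤ p.2} :=
      measurableSet_le measurable_fst.fst measurable_snd
    have h2 := Kernel.measurable_kernel_prodMk_left (κ := K) hs
    have h3 : ∀ w : ℝ × 𝒳 × ℝ,
        Prod.mk w ⁻¹' {p : (ℝ × 𝒳 × ℝ) × ℝ | p.1.1 ≤ p.2} = Set.Ici w.1 := by
      intro w; ext c; simp [Set.mem_Ici]
    simpa only [h3] using h2
  have hinner : ∀ w : ℝ × 𝒳 × ℝ, ∫ c, F (w, c) ∂(K w) = g w * (K w (Set.Ici w.1)).toReal := by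
    intro w
    have h4 : (fun c => F (w, c))
        = fun c => g w * ((Set.Ici w.1).indicator (fun _ => (1:ℝ)) c) := by
      funext c
      simp [hF_def, Set.indicator_apply, Set.mem_Ici]
    rw [h4, integral_const_mul, integral_indicator_const (1:ℝ) measurableSet_Ici,
      smul_eq_mul, mul_one, Measure.real_def]
  calc ∫ ω, g (T ω, X ω, A ω) * (if T ω ≤ C ω then (1:ℝ) else 0) ∂P
      = ∫ ω, F (W ω, C ω) ∂P := rfl
    _ = ∫ p, F p ∂(Measure.map (fun ω => (W ω, C ω)) P) :=
        (integral_map (hW.prodMk hC).aemeasurable hFmeas.aestronglyMeasurable).symm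
    _ = ∫ p, F p ∂((Measure.map W P) ⊗ₘ K) := by rw [hmap]
    _ = ∫ w, ∫ c, F (w, c) ∂(K w) ∂(Measure.map W P) := Measure.integral_compProd hFint
    _ = ∫ w, g w * (K w (Set.Ici w.1)).toReal ∂(Measure.map W P) :=
        integral_congr_ae (Filter.Eventually.of_forall hinner)
    _ = ∫ ω, g (W ω) * (K (W ω) (Set.Ici (W ω).1)).toReal ∂P :=
        integral_map hW.aemeasurable (hg.mul hKIci.ennreal_toReal).aestronglyMeasurable
    _ = ∫ ω, g (T ω, X ω, A ω) * (κ (X ω) (A ω) (Set.Ici (T ω))).toReal ∂P := rfl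

/-- CVaR-criterion part of Lemma 2 of the paper. With right-censored data
`Y = min(T,C)`, `Δ = 1{T ≤ C}`, conditional censoring survival function
`S_C(t,x,a) = κ x a [t,∞)` and propensity `π`, for every `α ∈ ℝ`,
`E[(α-T)·1{T≤α}·1{A=d(X)}/π(A,X)] = E[Δ(α-Y)·1{Y≤α}·1{A=d(X)}/(S_C(Y,X,A)π(A,X))]`,
and consequently the corresponding suprema over `α` of `αγ - E[⋯]` agree. -/
theorem stmt_4 {Ω 𝒳 : Type*} [mΩ : MeasurableSpace Ω] [StandardBorelSpace Ω]
    [MeasurableSpace 𝒳]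
    (P : Measure Ω) [IsProbabilityMeasure P]
    (X : Ω → 𝒳) (hX : Measurable X)
    (A : Ω → ℝ) (hA : Measurable A) (hAval : ∀ ω, A ω = 1 ∨ A ω = -1)
    (T C : Ω → ℝ) (hT : Measurable T) (hC : Measurable C)
    (h : ℝ) (hh : 0 < h) (hTb : ∀ᵐ ω ∂P, 0 ≤ T ω ∧ T ω ≤ h)
    (hindep : CondIndepFun (MeasurableSpace.comap (fun ω => (X ω, A ω)) inferInstance)
      ((hX.prodMk hA).comap_le) T C P)
    (κ : 𝒳 → ℝ → Measure ℝ) (hκprob : ∀ x a, IsProbabilityMeasure (κ x a))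
    (hκmeas : ∀ B : Set ℝ, MeasurableSet B →
      Measurable fun p : 𝒳 × ℝ => (κ p.1 p.2 B).toReal)
    (hκver : ∀ B : Set ℝ, MeasurableSet B →
      (fun ω => (κ (X ω) (A ω) B).toReal) =ᵐ[P]
        P[fun ω => B.indicator (fun _ => (1 : ℝ)) (C ω) |
          MeasurableSpace.comap (fun ω => (X ω, A ω)) inferInstance])
    (ηC : ℝ) (hηC : 0 < ηC)
    (hSpos : ∀ᵐ ω ∂P, ηC ≤ (κ (X ω) (A ω) (Set.Ici h)).toReal)
    (π : ℝ × 𝒳 → ℝ) (hπ : Measurable π) (η : ℝ) (hη : 0 < η)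
    (hπb : ∀ a x, η ≤ π (a, x) ∧ π (a, x) ≤ 1)
    (d : 𝒳 → ℝ) (hd : Measurable d) (hdval : ∀ x, d x = 1 ∨ d x = -1)
    (γ : ℝ) (hγ : γ ∈ Set.Ioo (0 : ℝ) 1) :
    (∀ α : ℝ,
      ∫ ω, (α - T ω) * (if T ω ≤ α then (1 : ℝ) else 0)
          * (if A ω = d (X ω) then (1 : ℝ) else 0) / π (A ω, X ω) ∂P
        = ∫ ω, (if T ω ≤ C ω then (1 : ℝ) else 0) * (α - min (T ω) (C ω))
            * (if min (T ω) (C ω) ≤ α then (1 : ℝ) else 0)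
            * (if A ω = d (X ω) then (1 : ℝ) else 0)
            / ((κ (X ω) (A ω) (Set.Ici (min (T ω) (C ω)))).toReal * π (A ω, X ω)) ∂P) ∧
    (⨆ α : ℝ, (α * γ -
        ∫ ω, (α - T ω) * (if T ω ≤ α then (1 : ℝ) else 0)
          * (if A ω = d (X ω) then (1 : ℝ) else 0) / π (A ω, X ω) ∂P)
      = ⨆ α : ℝ, (α * γ -
        ∫ ω, (if T ω ≤ C ω then (1 : ℝ) else 0) * (α - min (T ω) (C ω))
            * (if min (T ω) (C ω) ≤ α then (1 : ℝ) else 0)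
            * (if A ω = d (X ω) then (1 : ℝ) else 0)
            / ((κ (X ω) (A ω) (Set.Ici (min (T ω) (C ω)))).toReal * π (A ω, X ω)) ∂P)) := by
  classical
  -- measurability of the kernel as a function of (t, x, a)
  have hKEmeas : ∀ B : Set ℝ, MeasurableSet B →
      Measurable fun p : 𝒳 × ℝ => κ p.1 p.2 B := by
    intro B hB
    have h2 : Measurable fun p : 𝒳 × ℝ => ENNReal.ofReal ((κ p.1 p.2 B).toReal) :=
      ENNReal.measurable_ofReal.comp (hκmeas B hB)
    have heq : (fun p : 𝒳 × ℝ => κ p.1 p.2 B)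
        = fun p : 𝒳 × ℝ => ENNReal.ofReal ((κ p.1 p.2 B).toReal) := by
      funext p
      haveI := hκprob p.1 p.2
      exact (ENNReal.ofReal_toReal (measure_ne_top _ _)).symm
    rw [heq]; exact h2
  have hKmeas : Measurable fun w : ℝ × 𝒳 × ℝ => κ w.2.1 w.2.2 :=
    Measure.measurable_of_measurable_coe _ fun B hB => (hKEmeas B hB).comp measurable_snd
  set K : Kernel (ℝ × 𝒳 × ℝ) ℝ := ⟨fun w => κ w.2.1 w.2.2, hKmeas⟩ with hK_def
  haveI : IsMarkovKernel K := ⟨fun w => hκprob _ _⟩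
  have hclamp_meas : Measurable fun w : ℝ × 𝒳 × ℝ => min (max w.1 0) h :=
    (measurable_fst.max measurable_const).min measurable_const
  have hκIci : Measurable fun w : ℝ × 𝒳 × ℝ =>
      (κ w.2.1 w.2.2 (Set.Ici (min (max w.1 0) h))).toReal := by
    have hs : MeasurableSet {p : (ℝ × 𝒳 × ℝ) × ℝ | min (max p.1.1 0) h ≤ p.2} :=
      measurableSet_le (hclamp_meas.comp measurable_fst) measurable_snd
    have h2 := Kernel.measurable_kernel_prodMk_left (κ := K) hs
    have h3 : ∀ w : ℝ × 𝒳 × ℝ,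
        Prod.mk w ⁻¹' {p : (ℝ × 𝒳 × ℝ) × ℝ | min (max p.1.1 0) h ≤ p.2}
          = Set.Ici (min (max w.1 0) h) := by
      intro w; ext c; simp [Set.mem_Ici]
    have h4 : Measurable fun w : ℝ × 𝒳 × ℝ => K w (Set.Ici (min (max w.1 0) h)) := by
      simpa only [h3] using h2
    exact h4.ennreal_toReal
  have hdiag : MeasurableSet {w : ℝ × 𝒳 × ℝ | w.2.2 = d w.2.1} :=
    measurableSet_eq_fun measurable_snd.snd (hd.comp measurable_snd.fst)
  have part1 : ∀ α : ℝ,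
      ∫ ω, (α - T ω) * (if T ω ≤ α then (1 : ℝ) else 0)
          * (if A ω = d (X ω) then (1 : ℝ) else 0) / π (A ω, X ω) ∂P
        = ∫ ω, (if T ω ≤ C ω then (1 : ℝ) else 0) * (α - min (T ω) (C ω))
            * (if min (T ω) (C ω) ≤ α then (1 : ℝ) else 0)
            * (if A ω = d (X ω) then (1 : ℝ) else 0)
            / ((κ (X ω) (A ω) (Set.Ici (min (T ω) (C ω)))).toReal * π (A ω, X ω)) ∂P := by
    intro α
    set g : ℝ × 𝒳 × ℝ → ℝ := fun w =>
      (α - min (max w.1 0) h) * (if min (max w.1 0) h ≤ α then (1:ℝ) else 0)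
        * (if w.2.2 = d w.2.1 then (1:ℝ) else 0)
        / (max ηC ((κ w.2.1 w.2.2 (Set.Ici (min (max w.1 0) h))).toReal)
            * π (w.2.2, w.2.1)) with hg_def
    have hgm : Measurable g := by
      refine Measurable.div ?_ ?_
      · refine Measurable.mul ?_ ?_
        · refine Measurable.mul ?_ ?_
          · exact measurable_const.sub hclamp_meas
          · exact Measurable.ite (measurableSet_le hclamp_meas measurable_const)
              measurable_const measurable_const
        · exact Measurable.ite hdiag measurable_const measurable_const
      · exact (measurable_const.max hκIci).mul
          (hπ.comp (measurable_snd.snd.prodMk measurable_snd.fst))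
    have hgb : ∀ w, |g w| ≤ (|α| + h) / (ηC * η) := by
      intro w
      have ht0 : 0 ≤ min (max w.1 0) h := le_min (le_max_right _ _) hh.le
      have hth : min (max w.1 0) h ≤ h := min_le_right _ _
      have hi1 : |if min (max w.1 0) h ≤ α then (1:ℝ) else 0| ≤ 1 := by split <;> simp
      have hi2 : |if w.2.2 = d w.2.1 then (1:ℝ) else 0| ≤ 1 := by split <;> simp
      have hnum : |(α - min (max w.1 0) h) * (if min (max w.1 0) h ≤ α then (1:ℝ) else 0)
          * (if w.2.2 = d w.2.1 then (1:ℝ) else 0)| ≤ |α| + h := by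
        rw [abs_mul, abs_mul]
        have h1 : |α - min (max w.1 0) h| ≤ |α| + h := by
          refine (abs_sub _ _).trans ?_
          have : |min (max w.1 0) h| ≤ h := by rw [abs_of_nonneg ht0]; exact hth
          linarith
        have hb1 : |α - min (max w.1 0) h| * |if min (max w.1 0) h ≤ α then (1:ℝ) else 0|
            ≤ |α| + h := by
          calc |α - min (max w.1 0) h| * |if min (max w.1 0) h ≤ α then (1:ℝ) else 0|
              ≤ (|α| + h) * 1 := mul_le_mul h1 hi1 (abs_nonneg _) (by positivity)
            _ = |α| + h := mul_one _
        calc |α - min (max w.1 0) h| * |if min (max w.1 0) h ≤ α then (1:ℝ) else 0|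
              * |if w.2.2 = d w.2.1 then (1:ℝ) else 0|
            ≤ (|α| + h) * 1 := mul_le_mul hb1 hi2 (abs_nonneg _) (by positivity)
          _ = |α| + h := mul_one _
      have hden : ηC * η ≤ max ηC ((κ w.2.1 w.2.2 (Set.Ici (min (max w.1 0) h))).toReal)
          * π (w.2.2, w.2.1) :=
        mul_le_mul (le_max_left _ _) (hπb _ _).1 hη.le
          (le_trans hηC.le (le_max_left _ _))
      have hdenpos : 0 < max ηC ((κ w.2.1 w.2.2 (Set.Ici (min (max w.1 0) h))).toReal)
          * π (w.2.2, w.2.1) := lt_of_lt_of_le (by positivity) hden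
      rw [hg_def]
      rw [abs_div, abs_of_pos hdenpos]
      exact div_le_div₀ (by positivity) hnum (by positivity) hden
    -- a.e. pointwise identifications
    have haeT : ∀ᵐ ω ∂P, (0 ≤ T ω ∧ T ω ≤ h) ∧ ηC ≤ (κ (X ω) (A ω) (Set.Ici h)).toReal :=
      hTb.and hSpos
    have E1 : (fun ω => (α - T ω) * (if T ω ≤ α then (1 : ℝ) else 0)
          * (if A ω = d (X ω) then (1 : ℝ) else 0) / π (A ω, X ω))
        =ᵐ[P] fun ω => g (T ω, X ω, A ω)
          * (κ (X ω) (A ω) (Set.Ici (T ω))).toReal := by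
      filter_upwards [haeT] with ω hω
      obtain ⟨⟨h0, h1⟩, h2⟩ := hω
      have hcl : min (max (T ω) 0) h = T ω := by
        rw [max_eq_left h0, min_eq_left h1]
      have hrge : ηC ≤ (κ (X ω) (A ω) (Set.Ici (T ω))).toReal := by
        refine h2.trans ?_
        haveI := hκprob (X ω) (A ω)
        exact ENNReal.toReal_mono (measure_ne_top _ _)
          (measure_mono (Set.Ici_subset_Ici.mpr h1))
      have hr0 : (0:ℝ) < (κ (X ω) (A ω) (Set.Ici (T ω))).toReal :=
        lt_of_lt_of_le hηC hrge
      have hπ0 : (0:ℝ) < π (A ω, X ω) := lt_of_lt_of_le hη (hπb _ _).1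
      rw [hg_def]
      simp only [hcl, max_eq_right hrge]
      field_simp
    have E2 : (fun ω => (if T ω ≤ C ω then (1 : ℝ) else 0) * (α - min (T ω) (C ω))
            * (if min (T ω) (C ω) ≤ α then (1 : ℝ) else 0)
            * (if A ω = d (X ω) then (1 : ℝ) else 0)
            / ((κ (X ω) (A ω) (Set.Ici (min (T ω) (C ω)))).toReal * π (A ω, X ω)))
        =ᵐ[P] fun ω => g (T ω, X ω, A ω) * (if T ω ≤ C ω then (1:ℝ) else 0) := by
      filter_upwards [haeT] with ω hω
      obtain ⟨⟨h0, h1⟩, h2⟩ := hω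
      have hcl : min (max (T ω) 0) h = T ω := by
        rw [max_eq_left h0, min_eq_left h1]
      by_cases hTC : T ω ≤ C ω
      · have hrge : ηC ≤ (κ (X ω) (A ω) (Set.Ici (T ω))).toReal := by
          refine h2.trans ?_
          haveI := hκprob (X ω) (A ω)
          exact ENNReal.toReal_mono (measure_ne_top _ _)
            (measure_mono (Set.Ici_subset_Ici.mpr h1))
        rw [hg_def]
        simp only [if_pos hTC, min_eq_left hTC, hcl, max_eq_right hrge]
        ring
      · rw [hg_def]
        simp [if_neg hTC]
    calc ∫ ω, (α - T ω) * (if T ω ≤ α then (1 : ℝ) else 0)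
          * (if A ω = d (X ω) then (1 : ℝ) else 0) / π (A ω, X ω) ∂P
        = ∫ ω, g (T ω, X ω, A ω) * (κ (X ω) (A ω) (Set.Ici (T ω))).toReal ∂P :=
          integral_congr_ae E1
      _ = ∫ ω, g (T ω, X ω, A ω) * (if T ω ≤ C ω then (1:ℝ) else 0) ∂P :=
          (ipcw_key P X hX A hA T C hT hC hindep κ hκprob hκmeas hκver g hgm
            ((|α| + h) / (ηC * η)) hgb).symm
      _ = ∫ ω, (if T ω ≤ C ω then (1 : ℝ) else 0) * (α - min (T ω) (C ω))
            * (if min (T ω) (C ω) ≤ α then (1 : ℝ) else 0)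
            * (if A ω = d (X ω) then (1 : ℝ) else 0)
            / ((κ (X ω) (A ω) (Set.Ici (min (T ω) (C ω)))).toReal * π (A ω, X ω)) ∂P :=
          (integral_congr_ae E2).symm
  exact ⟨part1, iSup_congr fun α => by rw [part1 α]⟩
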